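/- With Q as defined and a_k the associated sequence, at every integer k ≥ 1 the one-sided limits satisfy Q(k) = a_k and lim_{τ→k⁻} Q(τ) = -α·e^{-α}·a_k. -/

import Mathlib

theorem Q_jumps (α : ℝ) (hα : 0 < α) (a : ℕ → ℝ) (Q : ℝ → ℝ)
    (ha0 : a 0 = 1)
    (ha : ∀ k : ℕ, 1 ≤ k →
      a k = -(Real.exp α / α) * ∑ j ∈ Finset.range k, a j / (Nat.factorial (k - j - 1)))
    (hQneg : ∀ τ : ℝ, τ < 0 → Q τ = 0)
    (hQ : ∀ (k : ℕ) (τ : ℝ), (k : ℝ) ≤ τ → τ < k + 1 →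
      Q τ = ∑ j ∈ Finset.range (k + 1), a j / (Nat.factorial (k - j)) * (τ - k) ^ (k - j)) :
    ∀ k : ℕ, 1 ≤ k → Q k = a k ∧
      Filter.Tendsto Q (nhdsWithin (k : ℝ) (Set.Iio (k : ℝ)))
        (nhds (-α * Real.exp (-α) * a k)) := by
  intro k hk
  obtain ⟨m, rfl⟩ : ∃ m, k = m + 1 := ⟨k - 1, (Nat.succ_pred_eq_of_pos hk).symm⟩
  constructor
  · rw [hQ (m + 1) ((m + 1 : ℕ) : ℝ) le_rfl (by push_cast; linarith)]
    rw [Finset.sum_eq_single (m + 1)]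
    · simp
    · intro j hj hne
      have hle : j ≤ m := by
        have := Finset.mem_range.mp hj; omega
      have hpos : 0 < m + 1 - j := by omega
      rw [sub_self, zero_pow (by omega), mul_zero]
    · intro h; exact absurd (Finset.self_mem_range_succ (m + 1)) h
  · set f : ℝ → ℝ := fun τ =>
      ∑ j ∈ Finset.range (m + 1), a j / (Nat.factorial (m - j)) * (τ - m) ^ (m - j) with hf
    have hfc : Continuous f := by
      apply continuous_finset_sum
      intro j _
      exact (continuous_const.mul ((continuous_id.sub continuous_const).pow _))
    have hS : f ((m + 1 : ℕ) : ℝ) = -α * Real.exp (-α) * a (m + 1) := by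
      have h1 : f ((m + 1 : ℕ) : ℝ) =
          ∑ j ∈ Finset.range (m + 1), a j / (Nat.factorial (m - j)) := by
        simp [hf]
      have h2 : a (m + 1) = -(Real.exp α / α) *
          ∑ j ∈ Finset.range (m + 1), a j / (Nat.factorial (m - j)) := by
        rw [ha (m + 1) (by omega)]
        congr 1
        apply Finset.sum_congr rfl
        intro j _
        have h : m + 1 - j - 1 = m - j := by omega
        rw [h]
      rw [h1, h2]
      have hE : Real.exp α ≠ 0 := Real.exp_ne_zero α
      rw [Real.exp_neg]
      field_simp
    have hQf : Q =ᶠ[nhdsWithin ((m + 1 : ℕ) : ℝ) (Set.Iio ((m + 1 : ℕ) : ℝ))] f := by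
      have hmem : Set.Ioo ((m : ℝ)) ((m + 1 : ℕ) : ℝ) ∈
          nhdsWithin ((m + 1 : ℕ) : ℝ) (Set.Iio ((m + 1 : ℕ) : ℝ)) := by
        apply Ioo_mem_nhdsLT_of_mem
        constructor
        · push_cast; linarith
        · exact le_rfl
      filter_upwards [hmem] with τ hτ
      have h1 : (m : ℝ) ≤ τ := le_of_lt hτ.1
      have h2 : τ < (m : ℝ) + 1 := by
        have := hτ.2; push_cast at this ⊢; linarith
      exact hQ m τ h1 h2
    have htend : Filter.Tendsto f (nhdsWithin ((m + 1 : ℕ) : ℝ) (Set.Iio ((m + 1 : ℕ) : ℝ)))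
        (nhds (-α * Real.exp (-α) * a (m + 1))) := by
      rw [← hS]
      exact (hfc.tendsto _).mono_left nhdsWithin_le_nhds
    exact htend.congr' hQf.symm
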